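/- Given a bimonoidal category C, matrix multiplication defines a functor Mat_{l,m}(C) × Mat_{m,n}(C) → Mat_{l,n}(C), where on objects (AB)_{ik} = ⊕_j (A_{ij} ⊗ B_{jk}) and on morphisms (fg)_{ik} = ⊕_j (f_{ij} ⊗ g_{jk}); i.e. this assignment preserves identities and composition. -/

import Mathlib

open CategoryTheory MonoidalCategory

universe v u

structure Bimonoidal (C : Type u) [Category.{v} C] where
  addMon : MonoidalCategory C
  addSymm : @SymmetricCategory C _ addMon
  mulMon : MonoidalCategory C
  distL : ∀ X Y Z : C,
    mulMon.tensorObj X (addMon.tensorObj Y Z) ≅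
      addMon.tensorObj (mulMon.tensorObj X Y) (mulMon.tensorObj X Z)
  distR : ∀ X Y Z : C,
    mulMon.tensorObj (addMon.tensorObj X Y) Z ≅
      addMon.tensorObj (mulMon.tensorObj X Z) (mulMon.tensorObj Y Z)
  nullL : ∀ X : C, mulMon.tensorObj addMon.tensorUnit X ≅ addMon.tensorUnit
  nullR : ∀ X : C, mulMon.tensorObj X addMon.tensorUnit ≅ addMon.tensorUnit

namespace Bimonoidal

variable {C : Type u} [Category.{v} C] (B : Bimonoidal C)

def add (X Y : C) : C := B.addMon.tensorObj X Y
def zero : C := B.addMon.tensorUnit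
def mul (X Y : C) : C := B.mulMon.tensorObj X Y
def one : C := B.mulMon.tensorUnit

def addHom {X X' Y Y' : C} (f : X ⟶ X') (g : Y ⟶ Y') : B.add X Y ⟶ B.add X' Y' :=
  B.addMon.tensorHom f g

def mulHom {X X' Y Y' : C} (f : X ⟶ X') (g : Y ⟶ Y') : B.mul X Y ⟶ B.mul X' Y' :=
  B.mulMon.tensorHom f g

def addBraid (X Y : C) : B.add X Y ≅ B.add Y X :=
  @BraidedCategory.braiding C _ B.addMon B.addSymm.toBraidedCategory X Y

def mulAssocIso (X Y Z : C) : B.mul (B.mul X Y) Z ≅ B.mul X (B.mul Y Z) :=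
  B.mulMon.associator X Y Z

def mulLamIso (X : C) : B.mul B.one X ≅ X := B.mulMon.leftUnitor X
def mulRhoIso (X : C) : B.mul X B.one ≅ X := B.mulMon.rightUnitor X

def addAssocIso (X Y Z : C) : B.add (B.add X Y) Z ≅ B.add X (B.add Y Z) :=
  B.addMon.associator X Y Z
def addLamIso (X : C) : B.add B.zero X ≅ X := B.addMon.leftUnitor X
def addRhoIso (X : C) : B.add X B.zero ≅ X := B.addMon.rightUnitor X

end Bimonoidal

abbrev MatO (C : Type u) (m n : ℕ) : Type u := Fin m → Fin n → C

namespace Bimonoidal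

variable {C : Type u} [Category.{v} C] (B : Bimonoidal C)

def finSum : ∀ {k : ℕ}, (Fin k → C) → C
  | 0, _ => B.zero
  | _ + 1, f => B.add (f 0) (finSum fun j => f j.succ)

def finSumHom : ∀ {k : ℕ} {F G : Fin k → C}, (∀ j, F j ⟶ G j) → (B.finSum F ⟶ B.finSum G)
  | 0, _, _, _ => 𝟙 B.zero
  | _ + 1, _, _, f => B.addHom (f 0) (finSumHom fun j => f j.succ)

def matMul {l m n : ℕ} (A : MatO C l m) (M : MatO C m n) : MatO C l n :=
  fun i k => B.finSum fun j => B.mul (A i j) (M j k)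

def matMulHom {l m n : ℕ} {A A' : MatO C l m} {M M' : MatO C m n}
    (f : A ⟶ A') (g : M ⟶ M') : B.matMul A M ⟶ B.matMul A' M' :=
  fun i k => B.finSumHom fun j => B.mulHom (f i j) (g j k)

def oneMat (m : ℕ) : MatO C m m := fun i j => if i = j then B.one else B.zero


theorem finSumHom_id : ∀ {k : ℕ} (F : Fin k → C),
    B.finSumHom (fun j => 𝟙 (F j)) = 𝟙 (B.finSum F)
  | 0, _ => rfl
  | _ + 1, F => by
    simp only [finSumHom, finSumHom_id, addHom, finSum, add]
    exact B.addMon.id_tensorHom_id _ _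

theorem finSumHom_comp : ∀ {k : ℕ} {F G H : Fin k → C}
    (f : ∀ j, F j ⟶ G j) (g : ∀ j, G j ⟶ H j),
    B.finSumHom (fun j => f j ≫ g j) = B.finSumHom f ≫ B.finSumHom g
  | 0, _, _, _, _, _ => (Category.id_comp _).symm
  | _ + 1, _, _, _, f, g => by
    simp only [finSumHom, finSumHom_comp, addHom]
    exact (B.addMon.tensorHom_comp_tensorHom _ _ _ _).symm

end Bimonoidal

/-- for a bimonoidal category `C`, matrix multiplication
`(A, M) ↦ AM`, `(AM)_{ik} = ⊕_j A_{ij} ⊗ M_{jk}` on objects and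
`(f, g) ↦ (fg)`, `(fg)_{ik} = ⊕_j f_{ij} ⊗ g_{jk}` on morphisms, defines a
functor `Mat_{l,m}(C) × Mat_{m,n}(C) → Mat_{l,n}(C)`: it preserves identities
and composition. -/
theorem stmt5 {C : Type u} [Category.{v} C] (B : Bimonoidal C) (l m n : ℕ) :
    (∀ (A : MatO C l m) (M : MatO C m n),
      B.matMulHom (𝟙 A) (𝟙 M) = 𝟙 (B.matMul A M)) ∧
    (∀ (A A' A'' : MatO C l m) (M M' M'' : MatO C m n)
      (f : A ⟶ A') (f' : A' ⟶ A'') (g : M ⟶ M') (g' : M' ⟶ M''),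
      B.matMulHom (f ≫ f') (g ≫ g') = B.matMulHom f g ≫ B.matMulHom f' g') := by
  constructor
  · intro A M
    funext i k
    show B.finSumHom _ = _
    have : (fun j => B.mulHom ((𝟙 A : A ⟶ A) i j) ((𝟙 M : M ⟶ M) j k))
        = fun j => 𝟙 (B.mul (A i j) (M j k)) := by
      funext j
      show B.mulHom (𝟙 _) (𝟙 _) = _
      exact B.mulMon.id_tensorHom_id _ _
    rw [this, B.finSumHom_id]
    rfl
  · intro A A' A'' M M' M'' f f' g g'
    funext i k
    show B.finSumHom _ = _
    have : (fun j => B.mulHom ((f ≫ f') i j) ((g ≫ g') j k))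
        = fun j => B.mulHom (f i j) (g j k) ≫ B.mulHom (f' i j) (g' j k) := by
      funext j
      exact (B.mulMon.tensorHom_comp_tensorHom _ _ _ _).symm
    rw [this, B.finSumHom_comp]
    rfl
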